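/- Let d ≥ 3 and 1 ≤ r ≤ d−2. Let Z_r^1 = Z ∩ span{y_0, …, y_r}. Suppose (z_s)_{s=0}^{r−1} is an orthonormal basis of Z_r^1 such that the coefficient of y_0 in z_0 is nonzero and the coefficient of y_0 in z_s is zero for 1 ≤ s ≤ r−1. Then this family extends to an orthonormal basis (z_s)_{s=0}^{d−2} of Z such that the coefficient of y_0 in z_r is nonzero and the coefficient of y_0 in z_s is zero for every s ∉ {0, r} with 0 ≤ s ≤ d−2. -/

import Mathlib

open scoped ComplexConjugate

-- inner-zero helper
lemma aux_inner_zero (d : ℕ) (x y : EuclideanSpace ℂ (Fin d)) (c : ℂ) (P : Fin d → Prop)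
    [DecidablePred P] (hx : ∀ t, ¬ P t → x t = 0) (hy : ∀ t, P t → y t = c)
    (hsum : ∑ t, x t = 0) : (inner ℂ x y : ℂ) = 0 := by
  rw [PiLp.inner_apply]
  simp only [RCLike.inner_apply]
  have h1 : ∀ t, (starRingEnd ℂ) (x t) * y t = conj (x t) * c := by
    intro t
    by_cases h : P t
    · rw [hy t h]
    · rw [hx t h]; simp
  rw [Finset.sum_congr rfl (fun t _ => (mul_comm _ _).trans (h1 t)), ← Finset.sum_mul, ← map_sum, hsum]
  simp

lemma aux_sum_two (d k : ℕ) (hk : k ≤ d) (a b : ℂ) :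
    ∑ t : Fin d, (if (t : ℕ) < k then a else b) = (k : ℂ) * a + ((d - k : ℕ) : ℂ) * b := by
  rw [Fin.sum_univ_eq_sum_range (fun t => if t < k then a else b)]
  rw [Finset.range_eq_Ico, ← Finset.sum_Ico_consecutive _ (Nat.zero_le k) hk]
  rw [Finset.sum_congr rfl (fun t ht => if_pos (Finset.mem_Ico.mp ht).2),
      Finset.sum_congr rfl (g := fun _ => b) (fun t ht => if_neg (by
        have := (Finset.mem_Ico.mp ht).1; omega))]
  rw [Finset.sum_const, Finset.sum_const, Nat.card_Ico, Nat.card_Ico, nsmul_eq_mul, nsmul_eq_mul]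
  simp

lemma aux_sum_three (d k m : ℕ) (hk : k ≤ m) (hm : m < d) (a b : ℂ) :
    ∑ t : Fin d, (if (t : ℕ) < k then 0 else if (t : ℕ) < m then a else if (t : ℕ) = m then b else 0)
      = ((m - k : ℕ) : ℂ) * a + b := by
  rw [Fin.sum_univ_eq_sum_range (fun t => if t < k then 0 else if t < m then a else if t = m then b else 0)]
  rw [Finset.range_eq_Ico, ← Finset.sum_Ico_consecutive _ (Nat.zero_le m) (le_of_lt hm),
      ← Finset.sum_Ico_consecutive _ (Nat.zero_le k) hk]
  have h1 : ∑ t ∈ Finset.Ico 0 k, (if t < k then (0:ℂ) else if t < m then a else if t = m then b else 0) = 0 := by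
    rw [Finset.sum_congr rfl (g := fun _ => (0:ℂ)) (fun t ht => if_pos (Finset.mem_Ico.mp ht).2)]
    simp
  have h2 : ∑ t ∈ Finset.Ico k m, (if t < k then (0:ℂ) else if t < m then a else if t = m then b else 0) = ((m - k : ℕ) : ℂ) * a := by
    rw [Finset.sum_congr rfl (g := fun _ => a) (fun t ht => by
      have h := Finset.mem_Ico.mp ht
      rw [if_neg (by omega), if_pos h.2])]
    rw [Finset.sum_const, Nat.card_Ico, nsmul_eq_mul]
  have h3 : ∑ t ∈ Finset.Ico m d, (if t < k then (0:ℂ) else if t < m then a else if t = m then b else 0) = b := by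
    rw [Finset.sum_congr rfl (g := fun t => if t = m then b else 0) (fun t ht => by
      have h := Finset.mem_Ico.mp ht
      rw [if_neg (by omega), if_neg (by omega)])]
    rw [Finset.sum_ite_eq' _ m (fun _ => b)]
    simp [Finset.mem_Ico, hm]
  rw [h1, h2, h3]; ring

-- support lemma
lemma aux_support (d r : ℕ) (u : EuclideanSpace ℂ (Fin d))
    (hu : u ∈ Submodule.span ℂ {v : EuclideanSpace ℂ (Fin d) | ∃ s : Fin d, (s : ℕ) ≤ r ∧ v = EuclideanSpace.single s (1 : ℂ)})
    (t : Fin d) (ht : r < (t : ℕ)) : u t = 0 := by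
  induction hu using Submodule.span_induction with
  | mem x hx =>
    obtain ⟨s, hs, rfl⟩ := hx
    rw [EuclideanSpace.single_apply]
    rw [if_neg (by intro h; subst h; omega)]
  | zero => rfl
  | add x y _ _ hx hy => show x t + y t = 0; rw [hx, hy, add_zero]
  | smul c x _ hx => show c * x t = 0; rw [hx, mul_zero]
open scoped ComplexConjugate

noncomputable def vvD (d r : ℕ) : EuclideanSpace ℂ (Fin d) :=
  WithLp.toLp 2 (((Real.sqrt ((r+1) * (d-1-r) * d : ℕ) : ℝ)⁻¹ : ℂ) •
    (fun t : Fin d => if (t : ℕ) < r+1 then ((d-1-r : ℕ) : ℂ) else -((r+1 : ℕ) : ℂ)))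

noncomputable def wwD (d r i : ℕ) : EuclideanSpace ℂ (Fin d) :=
  WithLp.toLp 2 (((Real.sqrt ((i-r) * (i-r+1) : ℕ) : ℝ)⁻¹ : ℂ) •
    (fun t : Fin d => if (t : ℕ) < r+1 then 0 else if (t : ℕ) < i+1 then 1
      else if (t : ℕ) = i+1 then -((i-r : ℕ) : ℂ) else 0))

lemma vvD_apply (d r : ℕ) (t : Fin d) :
    vvD d r t = ((Real.sqrt ((r+1) * (d-1-r) * d : ℕ) : ℝ)⁻¹ : ℂ) *
      (if (t : ℕ) < r+1 then ((d-1-r : ℕ) : ℂ) else -((r+1 : ℕ) : ℂ)) := rfl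

lemma wwD_apply (d r i : ℕ) (t : Fin d) :
    wwD d r i t = ((Real.sqrt ((i-r) * (i-r+1) : ℕ) : ℝ)⁻¹ : ℂ) *
      (if (t : ℕ) < r+1 then 0 else if (t : ℕ) < i+1 then 1
        else if (t : ℕ) = i+1 then -((i-r : ℕ) : ℂ) else 0) := rfl

lemma aux_inv_sqrt (N : ℝ) (hN : 0 < N) : (Real.sqrt N)⁻¹ * (Real.sqrt N)⁻¹ * N = 1 := by
  have hs := Real.mul_self_sqrt hN.le
  have hsne : Real.sqrt N ≠ 0 := by positivity
  rw [← hs]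
  field_simp
  rw [Real.sqrt_sq (Real.sqrt_nonneg N)]

lemma vvD_sum (d r : ℕ) (h : r + 2 ≤ d) : ∑ t, vvD d r t = 0 := by
  simp only [vvD_apply, ← Finset.mul_sum]
  rw [aux_sum_two d (r+1) (by omega)]
  have h1 : d - (r+1) = d - 1 - r := by omega
  rw [h1]
  ring

lemma wwD_sum (d r i : ℕ) (hri : r < i) (hid : i + 2 ≤ d) : ∑ t, wwD d r i t = 0 := by
  simp only [wwD_apply, ← Finset.mul_sum]
  rw [aux_sum_three d (r+1) (i+1) (by omega) (by omega)]
  have h1 : i + 1 - (r+1) = i - r := by omega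
  rw [h1]
  ring

lemma vvD_inner_self (d r : ℕ) (h : r + 2 ≤ d) : (inner ℂ (vvD d r) (vvD d r) : ℂ) = 1 := by
  rw [PiLp.inner_apply]
  simp only [RCLike.inner_apply, vvD_apply, map_mul, map_inv₀, Complex.conj_ofReal]
  have key : ∀ t : Fin d,
      ((Real.sqrt ((r+1) * (d-1-r) * d : ℕ) : ℝ) : ℂ)⁻¹ *
        (starRingEnd ℂ) (if (t : ℕ) < r+1 then ((d-1-r : ℕ) : ℂ) else -((r+1 : ℕ) : ℂ)) *
        (((Real.sqrt ((r+1) * (d-1-r) * d : ℕ) : ℝ) : ℂ)⁻¹ *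
          (if (t : ℕ) < r+1 then ((d-1-r : ℕ) : ℂ) else -((r+1 : ℕ) : ℂ))) =
      ((Real.sqrt ((r+1) * (d-1-r) * d : ℕ) : ℝ) : ℂ)⁻¹ *
        ((Real.sqrt ((r+1) * (d-1-r) * d : ℕ) : ℝ) : ℂ)⁻¹ *
        (if (t : ℕ) < r+1 then ((d-1-r : ℕ) : ℂ) * ((d-1-r : ℕ) : ℂ)
          else ((r+1 : ℕ) : ℂ) * ((r+1 : ℕ) : ℂ)) := by
    intro t
    by_cases ht : (t : ℕ) < r+1 <;> simp [ht] <;> ring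
  rw [Finset.sum_congr rfl (fun t _ => (mul_comm _ _).trans (key t)), ← Finset.mul_sum,
    aux_sum_two d (r+1) (by omega)]
  have h1 : d - (r+1) = d - 1 - r := by omega
  rw [h1]
  have hN : ((r+1) * (d-1-r) * d : ℕ) = (r+1) * ((d-1-r) * (d-1-r)) + (d-1-r) * ((r+1) * (r+1)) := by
    have h2 : d - 1 - r + (r + 1) = d := by omega
    set q := d - 1 - r with hq
    rw [← h2]; ring
  have hNpos : (0 : ℝ) < (((r+1) * (d-1-r) * d : ℕ) : ℝ) := by
    have : 0 < (r+1) * (d-1-r) * d := by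
      apply Nat.mul_pos (Nat.mul_pos (by omega) (by omega)) (by omega)
    exact_mod_cast this
  have hs : Real.sqrt (((r+1) * (d-1-r) * d : ℕ) : ℝ) * Real.sqrt (((r+1) * (d-1-r) * d : ℕ) : ℝ)
      = (((r+1) * (d-1-r) * d : ℕ) : ℝ) := Real.mul_self_sqrt hNpos.le
  have hsne : Real.sqrt (((r+1) * (d-1-r) * d : ℕ) : ℝ) ≠ 0 := by
    positivity
  have goalR : (Real.sqrt (((r+1) * (d-1-r) * d : ℕ) : ℝ))⁻¹ *
      (Real.sqrt (((r+1) * (d-1-r) * d : ℕ) : ℝ))⁻¹ * (((r+1) * (d-1-r) * d : ℕ) : ℝ) = 1 :=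
    aux_inv_sqrt _ hNpos
  calc ((Real.sqrt ((r+1) * (d-1-r) * d : ℕ) : ℝ) : ℂ)⁻¹ *
        ((Real.sqrt ((r+1) * (d-1-r) * d : ℕ) : ℝ) : ℂ)⁻¹ *
        (((r+1 : ℕ) : ℂ) * (((d-1-r : ℕ) : ℂ) * ((d-1-r : ℕ) : ℂ)) +
          ((d - 1 - r : ℕ) : ℂ) * (((r+1 : ℕ) : ℂ) * ((r+1 : ℕ) : ℂ)))
      = ((Real.sqrt ((r+1) * (d-1-r) * d : ℕ) : ℝ) : ℂ)⁻¹ *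
        ((Real.sqrt ((r+1) * (d-1-r) * d : ℕ) : ℝ) : ℂ)⁻¹ *
        ((((r+1) * (d-1-r) * d : ℕ) : ℕ) : ℂ) := by
        rw [hN]; push_cast; ring
    _ = 1 := by
        rw [show (((Real.sqrt ((r+1) * (d-1-r) * d : ℕ) : ℝ) : ℂ)⁻¹ *
            ((Real.sqrt ((r+1) * (d-1-r) * d : ℕ) : ℝ) : ℂ)⁻¹ *
            ((((r+1) * (d-1-r) * d : ℕ) : ℕ) : ℂ)) =
            (((Real.sqrt (((r+1) * (d-1-r) * d : ℕ) : ℝ))⁻¹ *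
              (Real.sqrt (((r+1) * (d-1-r) * d : ℕ) : ℝ))⁻¹ *
              (((r+1) * (d-1-r) * d : ℕ) : ℝ) : ℝ) : ℂ) by push_cast; ring]
        rw [goalR]
        norm_num

lemma wwD_inner_self (d r i : ℕ) (hri : r < i) (hid : i + 2 ≤ d) :
    (inner ℂ (wwD d r i) (wwD d r i) : ℂ) = 1 := by
  rw [PiLp.inner_apply]
  simp only [RCLike.inner_apply, wwD_apply, map_mul, map_inv₀, Complex.conj_ofReal]
  have key : ∀ t : Fin d,
      ((Real.sqrt ((i-r) * (i-r+1) : ℕ) : ℝ) : ℂ)⁻¹ *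
        (starRingEnd ℂ) (if (t : ℕ) < r+1 then 0 else if (t : ℕ) < i+1 then 1
          else if (t : ℕ) = i+1 then -((i-r : ℕ) : ℂ) else 0) *
        (((Real.sqrt ((i-r) * (i-r+1) : ℕ) : ℝ) : ℂ)⁻¹ *
          (if (t : ℕ) < r+1 then 0 else if (t : ℕ) < i+1 then 1
            else if (t : ℕ) = i+1 then -((i-r : ℕ) : ℂ) else 0)) =
      ((Real.sqrt ((i-r) * (i-r+1) : ℕ) : ℝ) : ℂ)⁻¹ *
        ((Real.sqrt ((i-r) * (i-r+1) : ℕ) : ℝ) : ℂ)⁻¹ *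
        (if (t : ℕ) < r+1 then 0 else if (t : ℕ) < i+1 then 1
          else if (t : ℕ) = i+1 then ((i-r : ℕ) : ℂ) * ((i-r : ℕ) : ℂ) else 0) := by
    intro t
    by_cases h1 : (t : ℕ) < r+1
    · simp only [if_pos h1]; simp
    · simp only [if_neg h1]
      by_cases h2 : (t : ℕ) < i+1
      · simp only [if_pos h2]; simp
      · simp only [if_neg h2]
        by_cases h3 : (t : ℕ) = i+1
        · simp only [if_pos h3, map_neg, map_natCast]; ring
        · simp only [if_neg h3]; simp
  rw [Finset.sum_congr rfl (fun t _ => (mul_comm _ _).trans (key t)), ← Finset.mul_sum,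
    aux_sum_three d (r+1) (i+1) (by omega) (by omega)]
  have hM : (i + 1 - (r+1)) + (i-r) * (i-r) = (i-r) * (i-r+1) := by
    have h1 : i + 1 - (r+1) = i - r := by omega
    rw [h1]; ring
  have hMpos : (0 : ℝ) < (((i-r) * (i-r+1) : ℕ) : ℝ) := by
    have : 0 < (i-r) * (i-r+1) := Nat.mul_pos (by omega) (by omega)
    exact_mod_cast this
  have goalR := aux_inv_sqrt _ hMpos
  calc ((Real.sqrt ((i-r) * (i-r+1) : ℕ) : ℝ) : ℂ)⁻¹ *
        ((Real.sqrt ((i-r) * (i-r+1) : ℕ) : ℝ) : ℂ)⁻¹ *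
        (((i + 1 - (r+1) : ℕ) : ℂ) * 1 + ((i-r : ℕ) : ℂ) * ((i-r : ℕ) : ℂ))
      = ((Real.sqrt ((i-r) * (i-r+1) : ℕ) : ℝ) : ℂ)⁻¹ *
        ((Real.sqrt ((i-r) * (i-r+1) : ℕ) : ℝ) : ℂ)⁻¹ *
        ((((i-r) * (i-r+1) : ℕ) : ℕ) : ℂ) := by
        rw [← hM]; push_cast; ring
    _ = 1 := by
        rw [show (((Real.sqrt ((i-r) * (i-r+1) : ℕ) : ℝ) : ℂ)⁻¹ *
            ((Real.sqrt ((i-r) * (i-r+1) : ℕ) : ℝ) : ℂ)⁻¹ *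
            ((((i-r) * (i-r+1) : ℕ) : ℕ) : ℂ)) =
            (((Real.sqrt (((i-r) * (i-r+1) : ℕ) : ℝ))⁻¹ *
              (Real.sqrt (((i-r) * (i-r+1) : ℕ) : ℝ))⁻¹ *
              (((i-r) * (i-r+1) : ℕ) : ℝ) : ℝ) : ℂ) by push_cast; ring]
        rw [goalR]
        norm_num

noncomputable def zext (d r : ℕ) (z : Fin r → EuclideanSpace ℂ (Fin d)) (i : Fin (d-1)) :
    EuclideanSpace ℂ (Fin d) :=
  if h : (i : ℕ) < r then z ⟨i, h⟩ else if (i : ℕ) = r then vvD d r else wwD d r i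

lemma zext_lt (d r : ℕ) (z : Fin r → EuclideanSpace ℂ (Fin d)) (i : Fin (d-1))
    (h : (i : ℕ) < r) : zext d r z i = z ⟨i, h⟩ := dif_pos h

lemma zext_eq (d r : ℕ) (z : Fin r → EuclideanSpace ℂ (Fin d)) (i : Fin (d-1))
    (h : (i : ℕ) = r) : zext d r z i = vvD d r := by
  unfold zext; rw [dif_neg (by omega), if_pos h]

lemma zext_gt (d r : ℕ) (z : Fin r → EuclideanSpace ℂ (Fin d)) (i : Fin (d-1))
    (h : r < (i : ℕ)) : zext d r z i = wwD d r i := by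
  unfold zext; rw [dif_neg (by omega), if_neg (by omega)]

/-- Extension technique: an orthonormal basis of `Z_r¹ = Z ∩ span{y_0,…,y_r}` in which the
coefficient of `y_0` is nonzero only in `z_0` extends to an orthonormal basis of `Z` in which
the coefficient of `y_0` is nonzero exactly in `z_0` and `z_r`. -/
theorem stmt_6 (d : ℕ) (hd : 3 ≤ d) (r : ℕ) (hr1 : 1 ≤ r) (hr2 : r ≤ d - 2)
    (Z : Submodule ℂ (EuclideanSpace ℂ (Fin d)))
    (hZ : ∀ f : EuclideanSpace ℂ (Fin d), f ∈ Z ↔ ∑ s, f s = 0)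
    (Z1 : Submodule ℂ (EuclideanSpace ℂ (Fin d)))
    (hZ1 : Z1 = Z ⊓ Submodule.span ℂ
      {v | ∃ s : Fin d, (s : ℕ) ≤ r ∧ v = EuclideanSpace.single s (1 : ℂ)})
    (z : Fin r → EuclideanSpace ℂ (Fin d))
    (hzo : Orthonormal ℂ z)
    (hzspan : Submodule.span ℂ (Set.range z) = Z1)
    (hz0 : (inner ℂ (EuclideanSpace.single (⟨0, by omega⟩ : Fin d) (1 : ℂ))
      (z ⟨0, hr1⟩) : ℂ) ≠ 0)
    (hzrest : ∀ s : Fin r, 1 ≤ (s : ℕ) →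
      (inner ℂ (EuclideanSpace.single (⟨0, by omega⟩ : Fin d) (1 : ℂ)) (z s) : ℂ) = 0) :
    ∃ z' : Fin (d - 1) → EuclideanSpace ℂ (Fin d),
      Orthonormal ℂ z' ∧
      Submodule.span ℂ (Set.range z') = Z ∧
      (∀ s : Fin r, z' (Fin.castLE (by omega) s) = z s) ∧
      (inner ℂ (EuclideanSpace.single (⟨0, by omega⟩ : Fin d) (1 : ℂ))
        (z' ⟨r, by omega⟩) : ℂ) ≠ 0 ∧
      (∀ s : Fin (d - 1), (s : ℕ) ≠ 0 → (s : ℕ) ≠ r →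
        (inner ℂ (EuclideanSpace.single (⟨0, by omega⟩ : Fin d) (1 : ℂ)) (z' s) : ℂ) = 0) := by
  classical
  -- basic facts about z
  have hzZ1 : ∀ s : Fin r, z s ∈ Z1 := by
    intro s
    rw [← hzspan]
    exact Submodule.subset_span (Set.mem_range_self s)
  have hzZ : ∀ s : Fin r, z s ∈ Z := by
    intro s; have h := hzZ1 s; rw [hZ1] at h; exact h.1
  have hzsum : ∀ s : Fin r, ∑ t, z s t = 0 := fun s => (hZ _).mp (hzZ s)
  have hzsupp : ∀ s : Fin r, ∀ t : Fin d, r < (t : ℕ) → z s t = 0 := by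
    intro s; have h := hzZ1 s; rw [hZ1] at h; exact aux_support d r _ h.2
  -- inner product zero facts
  have h_z_vv : ∀ s : Fin r, (inner ℂ (z s) (vvD d r) : ℂ) = 0 := by
    intro s
    refine aux_inner_zero d (z s) (vvD d r)
      (((Real.sqrt ((r+1) * (d-1-r) * d : ℕ) : ℝ)⁻¹ : ℂ) * ((d-1-r : ℕ) : ℂ))
      (fun t => (t : ℕ) < r + 1) (fun t ht => hzsupp s t (by omega)) ?_ (hzsum s)
    intro t ht
    rw [vvD_apply, if_pos ht]
  have h_z_ww : ∀ (s : Fin r) (i : ℕ), (inner ℂ (z s) (wwD d r i) : ℂ) = 0 := by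
    intro s i
    refine aux_inner_zero d (z s) (wwD d r i) 0 (fun t => (t : ℕ) < r + 1)
      (fun t ht => hzsupp s t (by omega)) ?_ (hzsum s)
    intro t ht
    rw [wwD_apply, if_pos ht, mul_zero]
  have hww_supp : ∀ (i : ℕ), ∀ t : Fin d, ¬ (r + 1 ≤ (t:ℕ) ∧ (t:ℕ) ≤ i + 1) → wwD d r i t = 0 := by
    intro i t ht
    rw [wwD_apply]
    by_cases h1 : (t:ℕ) < r + 1
    · rw [if_pos h1, mul_zero]
    · rw [if_neg h1, if_neg (by omega), if_neg (by omega), mul_zero]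
  have h_ww_vv : ∀ i : ℕ, r < i → i + 2 ≤ d → (inner ℂ (wwD d r i) (vvD d r) : ℂ) = 0 := by
    intro i hri hid
    refine aux_inner_zero d _ _
      (((Real.sqrt ((r+1) * (d-1-r) * d : ℕ) : ℝ)⁻¹ : ℂ) * (-((r+1 : ℕ) : ℂ)))
      (fun t => r + 1 ≤ (t:ℕ) ∧ (t:ℕ) ≤ i + 1) (hww_supp i) ?_ (wwD_sum d r i hri hid)
    intro t ht
    rw [vvD_apply, if_neg (by omega)]
  have h_ww_ww : ∀ i j : ℕ, r < i → i < j → j + 2 ≤ d → (inner ℂ (wwD d r i) (wwD d r j) : ℂ) = 0 := by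
    intro i j hri hij hjd
    refine aux_inner_zero d _ _
      (((Real.sqrt ((j-r) * (j-r+1) : ℕ) : ℝ)⁻¹ : ℂ) * 1)
      (fun t => r + 1 ≤ (t:ℕ) ∧ (t:ℕ) ≤ i + 1) (hww_supp i) ?_ (wwD_sum d r i hri (by omega))
    intro t ht
    rw [wwD_apply, if_neg (by omega), if_pos (by omega)]
  have symm0 : ∀ x y : EuclideanSpace ℂ (Fin d), (inner ℂ x y : ℂ) = 0 → (inner ℂ y x : ℂ) = 0 := by
    intro x y hxy; rw [← inner_conj_symm, hxy, map_zero]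
  -- orthonormality
  have hON : Orthonormal ℂ (zext d r z) := by
    rw [orthonormal_iff_ite]
    intro i j
    by_cases hij : i = j
    · subst hij; rw [if_pos rfl]
      rcases lt_trichotomy (i:ℕ) r with h | h | h
      · rw [zext_lt d r z i h]
        have := orthonormal_iff_ite.mp hzo ⟨i,h⟩ ⟨i,h⟩
        simpa using this
      · rw [zext_eq d r z i h]; exact vvD_inner_self d r (by omega)
      · rw [zext_gt d r z i h]; exact wwD_inner_self d r i h (by have := i.isLt; omega)
    · rw [if_neg hij]
      have hvalne : (i:ℕ) ≠ (j:ℕ) := fun hv => hij (Fin.ext hv)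
      rcases lt_trichotomy (i:ℕ) r with hi | hi | hi <;> rcases lt_trichotomy (j:ℕ) r with hj | hj | hj
      · rw [zext_lt d r z i hi, zext_lt d r z j hj]
        have := orthonormal_iff_ite.mp hzo ⟨i,hi⟩ ⟨j,hj⟩
        rwa [if_neg (show (⟨(i:ℕ),hi⟩ : Fin r) ≠ ⟨(j:ℕ),hj⟩ from fun hh => hvalne (congrArg (Fin.val : Fin r → ℕ) hh))] at this
      · rw [zext_lt d r z i hi, zext_eq d r z j hj]; exact h_z_vv ⟨i,hi⟩
      · rw [zext_lt d r z i hi, zext_gt d r z j hj]; exact h_z_ww ⟨i,hi⟩ j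
      · rw [zext_eq d r z i hi, zext_lt d r z j hj]; exact symm0 _ _ (h_z_vv ⟨j,hj⟩)
      · exact absurd (hi.trans hj.symm) hvalne
      · rw [zext_eq d r z i hi, zext_gt d r z j hj]
        exact symm0 _ _ (h_ww_vv j hj (by have := j.isLt; omega))
      · rw [zext_gt d r z i hi, zext_lt d r z j hj]; exact symm0 _ _ (h_z_ww ⟨j,hj⟩ i)
      · rw [zext_gt d r z i hi, zext_eq d r z j hj]
        exact h_ww_vv i hi (by have := i.isLt; omega)
      · rcases lt_trichotomy (i:ℕ) (j:ℕ) with hij2 | hij2 | hij2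
        · rw [zext_gt d r z i hi, zext_gt d r z j hj]
          exact h_ww_ww i j hi hij2 (by have := j.isLt; omega)
        · exact absurd hij2 hvalne
        · rw [zext_gt d r z i hi, zext_gt d r z j hj]
          exact symm0 _ _ (h_ww_ww j i hj hij2 (by have := i.isLt; omega))
  -- the span
  have hmem : ∀ i : Fin (d-1), zext d r z i ∈ Z := by
    intro i
    rcases lt_trichotomy (i:ℕ) r with h | h | h
    · rw [zext_lt d r z i h]; exact hzZ ⟨i,h⟩
    · rw [zext_eq d r z i h]; exact (hZ _).mpr (vvD_sum d r (by omega))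
    · rw [zext_gt d r z i h]
      exact (hZ _).mpr (wwD_sum d r i h (by have := i.isLt; omega))
  have hle : Submodule.span ℂ (Set.range (zext d r z)) ≤ Z := by
    rw [Submodule.span_le]; rintro x ⟨i, rfl⟩; exact hmem i
  have hcard : Module.finrank ℂ (Submodule.span ℂ (Set.range (zext d r z))) = d - 1 := by
    rw [finrank_span_eq_card hON.linearIndependent, Fintype.card_fin]
  have hZrank : Module.finrank ℂ Z = d - 1 := by
    let F : EuclideanSpace ℂ (Fin d) →ₗ[ℂ] ℂ :=
      { toFun := fun x => ∑ t, x t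
        map_add' := fun x y => by simp [Finset.sum_add_distrib]
        map_smul' := fun c x => by simp [Finset.mul_sum] }
    have hkerF : Z = LinearMap.ker F := by
      ext x; rw [hZ, LinearMap.mem_ker]; exact Iff.rfl
    have hsurj : Function.Surjective F := by
      intro a
      refine ⟨EuclideanSpace.single (⟨0, by omega⟩ : Fin d) a, ?_⟩
      show ∑ t, EuclideanSpace.single (⟨0, by omega⟩ : Fin d) a t = a
      simp [EuclideanSpace.single_apply]
    have hrange : LinearMap.range F = ⊤ := LinearMap.range_eq_top.mpr hsurj
    have hrk := LinearMap.finrank_range_add_finrank_ker F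
    rw [hrange, finrank_top, Module.finrank_self, finrank_euclideanSpace_fin] at hrk
    rw [hkerF]
    omega
  have hspan : Submodule.span ℂ (Set.range (zext d r z)) = Z :=
    Submodule.eq_of_le_of_finrank_le hle (by rw [hcard, hZrank])
  -- final assembly
  refine ⟨zext d r z, hON, hspan, ?_, ?_, ?_⟩
  · intro s
    have hlt : ((Fin.castLE (by omega) s : Fin (d-1)) : ℕ) < r := s.isLt
    rw [zext_lt d r z _ hlt]
    exact congrArg z (Fin.ext rfl)
  · rw [zext_eq d r z ⟨r, by omega⟩ rfl, EuclideanSpace.inner_single_left, map_one, one_mul,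
      vvD_apply, if_pos (show ((⟨0, by omega⟩ : Fin d) : ℕ) < r + 1 by simp)]
    have hNpos : (0 : ℝ) < (((r+1) * (d-1-r) * d : ℕ) : ℝ) := by
      have : 0 < (r+1) * (d-1-r) * d :=
        Nat.mul_pos (Nat.mul_pos (by omega) (by omega)) (by omega)
      exact_mod_cast this
    refine mul_ne_zero ?_ (Nat.cast_ne_zero.mpr (by omega : d - 1 - r ≠ 0))
    refine inv_ne_zero ?_
    rw [Ne, Complex.ofReal_eq_zero]
    exact ne_of_gt (Real.sqrt_pos.mpr hNpos)
  · intro s hs0 hsr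
    rcases lt_trichotomy (s:ℕ) r with h | h | h
    · rw [zext_lt d r z s h]
      exact hzrest ⟨s, h⟩ (show 1 ≤ (s:ℕ) by omega)
    · exact absurd h hsr
    · rw [zext_gt d r z s h, EuclideanSpace.inner_single_left, wwD_apply, if_pos (show ((⟨0, by omega⟩ : Fin d) : ℕ) < r + 1 by simp)]
      simp
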